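/- For a partition ν = (1^{n₁}, 2^{n₂}, ..., r^{n_r}) with |ν| = ∑ i·n_i, the dimension of the space of S_m-invariants in the tensor product (IE₁^m)^{⊗n₁} ⊗ ⋯ ⊗ (IE_r^m)^{⊗n_r} is constant for all m ≥ |ν|. -/

import Mathlib

/-- Injective `ℓ`-tuples of elements of `Fin m`. -/
def Tup (ℓ m : ℕ) : Type := {f : Fin ℓ → Fin m // Function.Injective f}

/-- Two injective tuples are related iff one is a cyclic rotation of the other. -/
def cycRel (ℓ m : ℕ) [NeZero ℓ] (a b : Tup ℓ m) : Prop :=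
  ∃ k : Fin ℓ, ∀ i, b.1 i = a.1 (i + k)

/-- The set `Γ_ℓ^m` of `ℓ`-cycles of `[1, m]`: injective `ℓ`-tuples of elements
of `{1, …, m}` modulo cyclic rotation. -/
def Cyc (ℓ m : ℕ) [NeZero ℓ] : Type := Quot (cycRel ℓ m)

/-- The coordinatewise action of `S_m` on the set of `ℓ`-cycles of `[1, m]`. -/
instance {ℓ m : ℕ} [NeZero ℓ] : MulAction (Equiv.Perm (Fin m)) (Cyc ℓ m) where
  smul g := Quot.map (fun f => ⟨g ∘ f.1, (Equiv.injective g).comp f.2⟩)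
    (by rintro a b ⟨k, hk⟩; exact ⟨k, fun i => congrArg g (hk i)⟩)
  one_smul := by rintro ⟨a⟩; rfl
  mul_smul := by rintro g h ⟨a⟩; rfl

open Function MulAction


/-- Functions with the same kernel are related by a permutation of the target. -/
theorem exists_perm_comp {α : Type*} [Fintype α] {m : ℕ} (f g : α → Fin m)
    (h : ∀ a b, f a = f b ↔ g a = g b) : ∃ σ : Equiv.Perm (Fin m), g = σ ∘ f := by
  classical
  have hF : ∀ x : {x // x ∈ Set.range f}, ∃ a, f a = x.1 := fun x => x.2
  let F : {x // x ∈ Set.range f} → {x // x ∈ Set.range g} :=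
    fun x => ⟨g (hF x).choose, ⟨(hF x).choose, rfl⟩⟩
  have hbij : Function.Bijective F := by
    constructor
    · rintro x x' hxx'
      have : g (hF x).choose = g (hF x').choose := congrArg Subtype.val hxx'
      have : f (hF x).choose = f (hF x').choose := (h _ _).2 this
      exact Subtype.ext ((hF x).choose_spec ▸ (hF x').choose_spec ▸ this)
    · rintro ⟨y, a, ha⟩
      refine ⟨⟨f a, a, rfl⟩, Subtype.ext ?_⟩
      have : f (hF ⟨f a, a, rfl⟩).choose = f a := (hF ⟨f a, a, rfl⟩).choose_spec
      simpa [F, ha] using (h _ _).1 this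
  let e := Equiv.ofBijective F hbij
  refine ⟨e.extendSubtype, funext fun a => ?_⟩
  have hmem : f a ∈ Set.range f := ⟨a, rfl⟩
  have h1 : e.extendSubtype (f a) = (e ⟨f a, hmem⟩).1 := by
    rw [e.extendSubtype_apply_of_mem (f a) hmem]
  have h2 : (e ⟨f a, hmem⟩).1 = g (hF ⟨f a, hmem⟩).choose := rfl
  have h3 : f (hF ⟨f a, hmem⟩).choose = f a := (hF ⟨f a, hmem⟩).choose_spec
  have h4 : g (hF ⟨f a, hmem⟩).choose = g a := (h _ _).1 h3
  simp [Function.comp, h1, h2, h4]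

/-- The dimension of invariants of a permutation representation is the number of orbits. -/
theorem finrank_invariants_eq_card_orbits (G X : Type*) [Group G] [MulAction G X] [Finite X] :
    Module.finrank ℚ (Representation.ofMulAction ℚ G X).invariants
      = Nat.card (Quotient (MulAction.orbitRel G X)) := by
  classical
  have key : ∀ v : MonoidAlgebra ℚ X, v ∈ (Representation.ofMulAction ℚ G X).invariants →
      ∀ (x y : X), (MulAction.orbitRel G X).r x y → v.coeff x = v.coeff y := by
    intro v hv x y hxy
    obtain ⟨g, hg⟩ := hxy
    rw [Representation.mem_invariants] at hv
    have := congrArg (fun w : MonoidAlgebra ℚ X => w.coeff (g • y)) (hv g)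
    simp only [Representation.ofMulAction_apply, inv_smul_smul] at this
    rw [← hg]; exact this.symm
  let L : (Representation.ofMulAction ℚ G X).invariants →ₗ[ℚ]
      (Quotient (MulAction.orbitRel G X) → ℚ) :=
    { toFun := fun v ω => (v.1 : MonoidAlgebra ℚ X).coeff ω.out
      map_add' := fun v w => by funext ω; simp
      map_smul' := fun c v => by funext ω; simp }
  have hconst : ∀ (v : (Representation.ofMulAction ℚ G X).invariants) (x : X),
      (v.1 : MonoidAlgebra ℚ X).coeff x = L v (Quotient.mk (MulAction.orbitRel G X) x) := by
    intro v x
    exact (key v.1 v.2 _ _ (Quotient.mk_out x)).symm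
  have hbij : Function.Bijective L := by
    constructor
    · intro v w hvw
      apply Subtype.ext; apply MonoidAlgebra.coeff_injective; apply Finsupp.ext; intro x
      rw [hconst v x, hconst w x, hvw]
    · intro c
      have hmem : (MonoidAlgebra.ofCoeff (Finsupp.equivFunOnFinite.symm (fun x => c (Quotient.mk _ x))) : MonoidAlgebra ℚ X)
          ∈ (Representation.ofMulAction ℚ G X).invariants := by
        rw [Representation.mem_invariants]
        intro g
        apply MonoidAlgebra.coeff_injective; apply Finsupp.ext; intro x
        simp only [Representation.ofMulAction_apply, MonoidAlgebra.coeff_ofCoeff, Finsupp.coe_equivFunOnFinite_symm]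
        exact congrArg c (Quotient.sound (MulAction.mem_orbit x g⁻¹))
      refine ⟨⟨_, hmem⟩, ?_⟩
      funext ω
      show (MonoidAlgebra.ofCoeff (Finsupp.equivFunOnFinite.symm (fun x => c (Quotient.mk _ x))) : MonoidAlgebra ℚ X).coeff ω.out = c ω
      simp only [MonoidAlgebra.coeff_ofCoeff, Finsupp.coe_equivFunOnFinite_symm]
      rw [Quotient.out_eq]
  haveI : Fintype (Quotient (MulAction.orbitRel G X)) := Fintype.ofFinite _
  rw [LinearEquiv.finrank_eq (LinearEquiv.ofBijective L hbij), Nat.card_eq_fintype_card]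
  exact Module.finrank_pi ℚ

theorem cycRel_equivalence (ℓ m : ℕ) [NeZero ℓ] : Equivalence (cycRel ℓ m) where
  refl a := ⟨0, fun i => by rw [add_zero]⟩
  symm := by
    rintro a b ⟨k, hk⟩
    exact ⟨-k, fun i => by rw [hk (i + -k), neg_add_cancel_right]⟩
  trans := by
    rintro a b c ⟨k₁, h₁⟩ ⟨k₂, h₂⟩
    exact ⟨k₂ + k₁, fun i => by rw [h₂ i, h₁ (i + k₂), add_assoc]⟩
theorem cyc_mk_eq {ℓ m : ℕ} [NeZero ℓ] {a b : Tup ℓ m} :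
    Quot.mk (cycRel ℓ m) a = Quot.mk (cycRel ℓ m) b ↔ cycRel ℓ m a b := by
  rw [Quot.eq, (cycRel_equivalence ℓ m).eqvGen_iff]
instance (ℓ m : ℕ) : Finite (Tup ℓ m) := Subtype.finite
instance (ℓ m : ℕ) [NeZero ℓ] : Finite (Cyc ℓ m) := Quot.finite _


section classify
variable (r : ℕ) (n : Fin r → ℕ)

/-- Index set `A` of all positions: for each `i`, `n i` tuples of length `i+1`. -/
abbrev IdxA : Type := Σ i : Fin r, Fin (n i) × Fin ((i : ℕ) + 1)

variable {r n}

/-- Rotation of positions within each tuple. -/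
def rotA (ρ : ∀ i : Fin r, Fin (n i) → Fin ((i : ℕ) + 1)) (a : IdxA r n) : IdxA r n :=
  ⟨a.1, (a.2.1, a.2.2 + ρ a.1 a.2.1)⟩

/-- Admissible setoids: distinct positions in a single tuple are inequivalent. -/
def Adm (S : Setoid (IdxA r n)) : Prop :=
  ∀ (i : Fin r) (j : Fin (n i)) (k k' : Fin ((i : ℕ) + 1)),
    S.r ⟨i, (j, k)⟩ ⟨i, (j, k')⟩ → k = k'

/-- Two admissible setoids give the same orbit iff related by a rotation. -/
def patRel (S S' : {S : Setoid (IdxA r n) // Adm S}) : Prop :=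
  ∃ ρ, ∀ a b, S'.1.r a b ↔ S.1.r (rotA ρ a) (rotA ρ b)

variable (r n) in
/-- The classifying type for orbits, independent of `m`. -/
def Pat : Type := Quot (@patRel r n)

variable (m : ℕ)
abbrev XS (r : ℕ) (n : Fin r → ℕ) (m : ℕ) : Type := ∀ i : Fin r, Fin (n i) → Cyc ((i : ℕ) + 1) m

def blockInj (f : IdxA r n → Fin m) : Prop :=
  ∀ (i : Fin r) (j : Fin (n i)), Function.Injective fun k => f ⟨i, (j, k)⟩

def mkX (f : IdxA r n → Fin m) (hf : blockInj m f) : XS r n m :=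
  fun i j => Quot.mk _ ⟨fun k => f ⟨i, (j, k)⟩, hf i j⟩

theorem smul_mkX (σ : Equiv.Perm (Fin m)) (f : IdxA r n → Fin m) (hf : blockInj m f) :
    σ • mkX m f hf = mkX m (σ ∘ f) (fun i j => (σ.injective.comp (hf i j) : _)) := rfl

/-- Core lemma: if `f'` has the same kernel as `f ∘ rotA ρ` then the associated
points are in the same orbit. -/
theorem mkX_orbit_eq (f f' : IdxA r n → Fin m) (hf : blockInj m f) (hf' : blockInj m f')
    (ρ : ∀ i : Fin r, Fin (n i) → Fin ((i : ℕ) + 1))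
    (h : ∀ a b, f' a = f' b ↔ f (rotA ρ a) = f (rotA ρ b)) :
    Quotient.mk (MulAction.orbitRel (Equiv.Perm (Fin m)) (XS r n m)) (mkX m f' hf')
      = Quotient.mk (MulAction.orbitRel (Equiv.Perm (Fin m)) (XS r n m)) (mkX m f hf) := by
  classical
  obtain ⟨σ, hσ⟩ := exists_perm_comp (f ∘ rotA ρ) f' (fun a b => (h a b).symm)
  have hx : σ • mkX m f hf = mkX m f' hf' := by
    funext i j
    show Quot.mk _ (⟨σ ∘ fun k => f ⟨i, (j, k)⟩, _⟩ : Tup _ m) = Quot.mk _ ⟨fun k => f' ⟨i, (j, k)⟩, _⟩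
    refine Quot.sound ⟨ρ i j, fun k => ?_⟩
    show f' ⟨i, (j, k)⟩ = σ (f ⟨i, (j, k + ρ i j)⟩)
    exact congrFun hσ ⟨i, (j, k)⟩
  exact Quotient.sound ⟨σ, hx⟩

@[simp] theorem rotA_zero (a : IdxA r n) : rotA (fun _ _ => 0) a = a := by
  obtain ⟨i, j, k⟩ := a; simp [rotA]

variable (hm : Fintype.card (IdxA r n) ≤ m)

noncomputable def embS (S : {S : Setoid (IdxA r n) // Adm S}) : Quotient S.1 ↪ Fin m := by
  haveI : Fintype (Quotient S.1) := Fintype.ofFinite _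
  have h1 : Fintype.card (Quotient S.1) ≤ Fintype.card (Fin m) := by
    rw [Fintype.card_fin]
    exact le_trans (Fintype.card_le_of_surjective (Quotient.mk S.1)
      (fun q => Quot.exists_rep q)) hm
  exact (Function.Embedding.nonempty_of_card_le h1).some

noncomputable def fS (S : {S : Setoid (IdxA r n) // Adm S}) : IdxA r n → Fin m :=
  fun a => embS m hm S (Quotient.mk S.1 a)

theorem fS_ker (S : {S : Setoid (IdxA r n) // Adm S}) (a b : IdxA r n) :
    fS m hm S a = fS m hm S b ↔ S.1.r a b := by
  constructor
  · intro h
    exact @Quotient.exact _ S.1 a b ((embS m hm S).injective h)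
  · intro h
    exact congrArg (embS m hm S) (Quot.sound h)

theorem fS_blockInj (S : {S : Setoid (IdxA r n) // Adm S}) : blockInj m (fS m hm S) :=
  fun i j k k' h => S.2 i j k k' ((fS_ker m hm S _ _).1 h)

noncomputable def psi0 (S : {S : Setoid (IdxA r n) // Adm S}) :
    Quotient (MulAction.orbitRel (Equiv.Perm (Fin m)) (XS r n m)) :=
  Quotient.mk _ (mkX m (fS m hm S) (fS_blockInj m hm S))

theorem psi0_desc (S S' : {S : Setoid (IdxA r n) // Adm S}) (h : patRel S S') :
    psi0 m hm S = psi0 m hm S' := by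
  obtain ⟨ρ, hρ⟩ := h
  refine (mkX_orbit_eq m _ _ (fS_blockInj m hm S) (fS_blockInj m hm S') ρ ?_).symm
  intro a b
  rw [fS_ker, fS_ker, hρ]

noncomputable def PsiF : Pat r n →
    Quotient (MulAction.orbitRel (Equiv.Perm (Fin m)) (XS r n m)) :=
  Quot.lift (psi0 m hm) (psi0_desc m hm)

theorem PsiF_surjective : Function.Surjective (PsiF m hm) := by
  intro q
  obtain ⟨x, rfl⟩ := Quot.exists_rep q
  set y : ∀ i : Fin r, Fin (n i) → Tup ((i : ℕ) + 1) m := fun i j => (x i j).out with hy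
  set f : IdxA r n → Fin m := fun a => (y a.1 a.2.1).1 a.2.2 with hf
  have hbi : blockInj m f := fun i j => (y i j).2
  have hSe : Equivalence (fun a b : IdxA r n => f a = f b) :=
    ⟨fun _ => rfl, Eq.symm, Eq.trans⟩
  set S : Setoid (IdxA r n) := ⟨fun a b => f a = f b, hSe⟩ with hS
  have adm : Adm S := fun i j k k' h => hbi i j h
  refine ⟨Quot.mk _ ⟨S, adm⟩, ?_⟩
  show psi0 m hm ⟨S, adm⟩ = Quotient.mk _ x
  have step1 : psi0 m hm ⟨S, adm⟩ = Quotient.mk _ (mkX m f hbi) := by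
    refine mkX_orbit_eq m f (fS m hm ⟨S, adm⟩) hbi (fS_blockInj m hm _) (fun _ _ => 0) ?_
    intro a b
    rw [fS_ker, rotA_zero, rotA_zero]
    exact Iff.rfl
  rw [step1]
  congr 1
  funext i j
  show Quot.mk _ (⟨(y i j).1, _⟩ : Tup _ m) = x i j
  have : (⟨(y i j).1, hbi i j⟩ : Tup ((i : ℕ) + 1) m) = y i j := Subtype.ext rfl
  rw [this, hy]
  exact Quot.out_eq (x i j)

theorem PsiF_injective : Function.Injective (PsiF m hm) := by
  intro p q
  induction p using Quot.ind with | _ S =>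
  induction q using Quot.ind with | _ S' =>
  intro h
  have h' : Quotient.mk _ (mkX m (fS m hm S) (fS_blockInj m hm S))
      = Quotient.mk _ (mkX m (fS m hm S') (fS_blockInj m hm S')) := h
  obtain ⟨σ, hσ⟩ : mkX m (fS m hm S) (fS_blockInj m hm S)
      ∈ MulAction.orbit (Equiv.Perm (Fin m)) (mkX m (fS m hm S') (fS_blockInj m hm S')) :=
    Quotient.exact h'
  have hrot : ∀ (i : Fin r) (j : Fin (n i)), ∃ k : Fin ((i : ℕ) + 1),
      ∀ x, fS m hm S ⟨i, (j, x)⟩ = σ (fS m hm S' ⟨i, (j, x + k)⟩) := by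
    intro i j
    have hcomp : (σ • mkX m (fS m hm S') (fS_blockInj m hm S')) i j
        = mkX m (fS m hm S) (fS_blockInj m hm S) i j := congrFun (congrFun hσ i) j
    have hcyc : cycRel ((i : ℕ) + 1) m
        ⟨σ ∘ fun k => fS m hm S' ⟨i, (j, k)⟩, (σ.injective.comp (fS_blockInj m hm S' i j) : _)⟩
        ⟨fun k => fS m hm S ⟨i, (j, k)⟩, fS_blockInj m hm S i j⟩ := cyc_mk_eq.1 hcomp
    obtain ⟨k, hk⟩ := hcyc
    exact ⟨k, hk⟩
  classical
  set ρ : ∀ i : Fin r, Fin (n i) → Fin ((i : ℕ) + 1) := fun i j => (hrot i j).choose with hρdef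
  have hρ : ∀ a : IdxA r n, fS m hm S a = σ (fS m hm S' (rotA ρ a)) := by
    rintro ⟨i, j, k⟩
    exact (hrot i j).choose_spec k
  refine Eq.symm (Quot.sound ⟨ρ, fun a b => ?_⟩)
  rw [← fS_ker m hm S, ← fS_ker m hm S', hρ a, hρ b]
  exact ⟨fun hab => σ.injective hab, fun hab => congrArg σ hab⟩

theorem card_orbits_eq_card_pat (hm : Fintype.card (IdxA r n) ≤ m) :
    Nat.card (Quotient (MulAction.orbitRel (Equiv.Perm (Fin m)) (XS r n m)))
      = Nat.card (Pat r n) :=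
  (Nat.card_eq_of_bijective (PsiF m hm) ⟨PsiF_injective m hm, PsiF_surjective m hm⟩).symm

end classify


/-- For a partition `ν = (1^{n 0}, 2^{n 1}, …, r^{n (r-1)})`, the dimension of the space of
`S_m`-invariants in the tensor product `(IE₁^m)^{⊗ n 0} ⊗ ⋯ ⊗ (IE_r^m)^{⊗ n (r-1)}`
(realized as the permutation representation of `S_m` on the product of the corresponding
sets of cycles, with the diagonal action) is constant for `m ≥ |ν| = ∑ (i+1)·(n i)`. -/
theorem dim_invariants_constant (r : ℕ) (n : Fin r → ℕ) (m m' : ℕ)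
    (hm : ∑ i : Fin r, ((i : ℕ) + 1) * n i ≤ m) (hm' : ∑ i : Fin r, ((i : ℕ) + 1) * n i ≤ m') :
    Module.finrank ℚ (Representation.ofMulAction ℚ (Equiv.Perm (Fin m))
        (∀ i : Fin r, Fin (n i) → Cyc ((i : ℕ) + 1) m)).invariants =
      Module.finrank ℚ (Representation.ofMulAction ℚ (Equiv.Perm (Fin m'))
        (∀ i : Fin r, Fin (n i) → Cyc ((i : ℕ) + 1) m')).invariants := by
  have hcard : Fintype.card (IdxA r n) = ∑ i : Fin r, ((i : ℕ) + 1) * n i := by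
    simp [Fintype.card_sigma, mul_comm]
  rw [finrank_invariants_eq_card_orbits, finrank_invariants_eq_card_orbits,
    card_orbits_eq_card_pat m (by rw [hcard]; exact hm),
    card_orbits_eq_card_pat m' (by rw [hcard]; exact hm')]
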